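/- The sum of the zeros (with multiplicity) of the polynomial p_n, defined by p₀ = 1, p₁(z) = z + 1, p_{n+1}(z) = (2n+1)p_n(z) + z² p_{n−1}(z), equals −n(n+1)/2 for every n ≥ 0. -/

import Mathlib

open Polynomial

/-- The sum of the zeros (with multiplicity) of the polynomial p_n defined by
p₀ = 1, p₁ = z + 1, p_{n+1} = (2n+1)p_n + z²p_{n−1} equals −n(n+1)/2. -/
theorem sum_of_zeros_pn (p : ℕ → Polynomial ℂ)
    (hp0 : p 0 = 1) (hp1 : p 1 = X + 1)
    (hprec : ∀ n : ℕ, 1 ≤ n →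
      p (n + 1) = (2 * n + 1) • p n + X ^ 2 * p (n - 1)) :
    ∀ n : ℕ, ((p n).roots).sum = -(n * (n + 1)) / 2 := by
  have key : ∀ n : ℕ, (p n).Monic ∧ (p n).natDegree = n ∧
      (p n).nextCoeff = (n * (n + 1) : ℂ) / 2 := by
    intro n
    induction n using Nat.strong_induction_on with
    | _ n ih =>
      match n with
      | 0 => simp [hp0, nextCoeff]
      | 1 =>
        have h1 : p 1 = X + C 1 := by rw [hp1, map_one]
        refine ⟨h1 ▸ monic_X_add_C 1, h1 ▸ natDegree_X_add_C 1, ?_⟩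
        rw [h1, nextCoeff_of_natDegree_pos (by rw [natDegree_X_add_C]; exact one_pos), natDegree_X_add_C]
        norm_num
      | (n + 2) =>
        obtain ⟨h1m, h1d, h1c⟩ := ih (n + 1) (by omega)
        obtain ⟨h0m, h0d, h0c⟩ := ih n (by omega)
        have hrec := hprec (n + 1) (by omega)
        simp only [Nat.add_sub_cancel] at hrec
        rw [← Nat.cast_smul_eq_nsmul ℂ] at hrec
        have hXm : (X ^ 2 * p n).Monic := (monic_X_pow 2).mul h0m
        have hXd : (X ^ 2 * p n).natDegree = n + 2 := by
          rw [(monic_X_pow 2).natDegree_mul h0m, natDegree_X_pow, h0d]; ring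
        have hXdeg : (X ^ 2 * p n).degree = ((n + 2 : ℕ) : WithBot ℕ) := by
          rw [degree_eq_natDegree hXm.ne_zero, hXd]
        have hlt : (((2 * (n + 1) + 1 : ℕ) : ℂ) • p (n + 1)).degree < (X ^ 2 * p n).degree := by
          refine lt_of_le_of_lt (degree_smul_le _ _) ?_
          rw [hXdeg, degree_eq_natDegree h1m.ne_zero, h1d]
          exact Nat.cast_lt.mpr (by omega)
        have hm : (p (n + 2)).Monic := by
          rw [hrec, add_comm]
          exact hXm.add_of_left hlt
        have hd : (p (n + 2)).natDegree = n + 2 := by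
          rw [hrec, add_comm, natDegree_add_eq_left_of_degree_lt hlt, hXd]
        refine ⟨hm, hd, ?_⟩
        have hcoeff : (X ^ 2 * p n).coeff (n + 1) = (p n).nextCoeff := by
          match n with
          | 0 => simp [hp0, coeff_X_pow, nextCoeff]
          | (m + 1) =>
            have : m + 1 + 1 = m + 2 := by ring
            rw [this, mul_comm, coeff_mul_X_pow, nextCoeff_of_natDegree_pos (by omega), h0d]
            norm_num
        rw [nextCoeff_of_natDegree_pos (by omega), hd, show n + 2 - 1 = n + 1 from rfl]
        have : (p (n + 2)).coeff (n + 1)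
            = ((2 * (n + 1) + 1 : ℕ) : ℂ) * (p (n + 1)).coeff (n + 1) + (X ^ 2 * p n).coeff (n + 1) := by
          rw [hrec, coeff_add, coeff_smul, smul_eq_mul]
        rw [this, hcoeff, h0c]
        have hlead : (p (n + 1)).coeff (n + 1) = 1 := by
          have := h1m.leadingCoeff
          rwa [leadingCoeff, h1d] at this
        rw [hlead]
        push_cast
        ring
  intro n
  obtain ⟨hm, hd, hc⟩ := key n
  have hs : (p n).nextCoeff = -((p n).roots).sum :=
    (IsAlgClosed.splits (p n)).nextCoeff_eq_neg_sum_roots_of_monic hm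
  rw [hc] at hs
  linear_combination hs
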